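/- If p ≥ 100 and T ≥ 2·s(x)·log(p) with T ≤ p and x ∈ R^p nonzero, then (1/√T)·‖x − x_T‖₁/‖x‖₂ ≤ 1/3. -/
import Mathlib

lemma log_hundred_ge : (4.5 : ℝ) ≤ Real.log 100 := by
  rw [Real.le_log_iff_exp_le (by norm_num)]
  have h : Real.exp 4.5 ^ 2 = Real.exp 9 := by
    rw [← Real.exp_nat_mul]; norm_num
  have h9 : Real.exp 9 = Real.exp 1 ^ 9 := by
    rw [← Real.exp_nat_mul]; norm_num
  have hlt : Real.exp 1 ^ 9 < 2.7182818286 ^ 9 :=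
    pow_lt_pow_left₀ Real.exp_one_lt_d9 (Real.exp_pos 1).le (by norm_num)
  have hnum : (2.7182818286 : ℝ) ^ 9 < 10000 := by norm_num
  nlinarith [Real.exp_pos (4.5 : ℝ)]

/-- If `p ≥ 100` and `T ≥ 2·s(x)·log p` with `T ≤ p`, then the `T`-term
approximation error is at most `1/3`. -/
theorem approx_error_le_third (p T : ℕ) (hp : 100 ≤ p) (hT1 : 1 ≤ T) (hTp : T ≤ p)
    (x : Fin p → ℝ) (hx : x ≠ 0) (S : Finset (Fin p)) (hS : S.card = T)
    (hbig : ∀ i ∈ S, ∀ j ∉ S, |x j| ≤ |x i|)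
    (hT : 2 * ((∑ i, |x i|) ^ 2 / (∑ i, (x i) ^ 2)) * Real.log p ≤ (T : ℝ)) :
    (1 / Real.sqrt T) *
        ((∑ i, |x i - (if i ∈ S then x i else 0)|) / Real.sqrt (∑ i, (x i) ^ 2)) ≤
      1 / 3 := by
  set A : ℝ := ∑ i, |x i| with hA
  set B : ℝ := ∑ i, (x i) ^ 2 with hB
  have hA0 : 0 ≤ A := Finset.sum_nonneg fun i _ => abs_nonneg _
  have hBpos : 0 < B := by
    obtain ⟨i, hi⟩ := Function.ne_iff.mp hx
    have : (x i) ^ 2 ≤ B :=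
      Finset.single_le_sum (f := fun j => (x j)^2) (fun j _ => sq_nonneg _)
        (Finset.mem_univ i)
    nlinarith [sq_nonneg (x i), pow_pos (abs_pos.mpr hi) 2, sq_abs (x i)]
  have htail : (∑ i, |x i - (if i ∈ S then x i else 0)|) ≤ A := by
    apply Finset.sum_le_sum
    intro i _
    by_cases h : i ∈ S <;> simp [h, abs_nonneg]
  have hlogp : (4.5 : ℝ) ≤ Real.log p := by
    calc (4.5 : ℝ) ≤ Real.log 100 := log_hundred_ge
    _ ≤ Real.log p := Real.log_le_log (by norm_num) (by exact_mod_cast hp)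
  have hkey : 9 * A ^ 2 ≤ (T : ℝ) * B := by
    have h1 : 2 * A ^ 2 * Real.log p ≤ (T : ℝ) * B := by
      have := mul_le_mul_of_nonneg_right hT hBpos.le
      rw [show 2 * (A ^ 2 / B) * Real.log ↑p * B = 2 * A ^ 2 * Real.log ↑p * (B / B) by ring,
        div_self hBpos.ne', mul_one] at this
      exact this
    nlinarith [sq_nonneg A]
  have hsq : 3 * A ≤ Real.sqrt ((T : ℝ) * B) := by
    have := Real.sqrt_le_sqrt hkey
    rwa [show (9 : ℝ) * A ^ 2 = (3 * A) ^ 2 by ring,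
      Real.sqrt_sq (by linarith)] at this
  have hTpos : (0 : ℝ) < T := by exact_mod_cast hT1
  have hsTB : 0 < Real.sqrt ((T : ℝ) * B) := Real.sqrt_pos.mpr (by positivity)
  have hmulsqrt : Real.sqrt (T : ℝ) * Real.sqrt B = Real.sqrt ((T : ℝ) * B) :=
    (Real.sqrt_mul hTpos.le B).symm
  have h1 : (1 / Real.sqrt T) *
      ((∑ i, |x i - (if i ∈ S then x i else 0)|) / Real.sqrt B) ≤
      A / Real.sqrt ((T : ℝ) * B) := by
    rw [div_mul_div_comm, one_mul, mul_comm (Real.sqrt (T:ℝ)), mul_comm (Real.sqrt B)] 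
    rw [hmulsqrt]
    exact div_le_div_of_nonneg_right htail hsTB.le
  have h2 : A / Real.sqrt ((T : ℝ) * B) ≤ 1 / 3 := by
    rw [div_le_div_iff₀ hsTB (by norm_num)]
    linarith
  exact h1.trans h2
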